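/- Let A be an m×n real matrix and let A₁₁ be a nonsingular k×k submatrix of A having local ρ-maximum volume in A for some ρ ≥ 1. Then σ_k(A) ≥ σ_min(A₁₁) ≥ σ_k(A)/(ρk√((m−k+1)(n−k+1))), where σ_min(A₁₁) = σ_k(A₁₁) is the smallest singular value of A₁₁. -/

import Mathlib

open Matrix Finset Submodule

set_option linter.unusedSectionVars false
set_option linter.unusedVariables false
set_option maxHeartbeats 1000000

/-- The `k`-th largest value (1-indexed) of a finite family of reals. -/
noncomputable def kthLargest {ι : Type*} [Fintype ι] (f : ι → ℝ) (k : ℕ) : ℝ :=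
  ((Finset.univ.val.map f).sort (· ≤ ·)).getD (Fintype.card ι - k) 0

/-- The `k`-th largest singular value (1-indexed) of a real matrix,
i.e. the square root of the `k`-th largest eigenvalue of `Aᴴ * A`. -/
noncomputable def singularValue {m n : Type*} [Fintype m] [Fintype n] [DecidableEq n]
    (A : Matrix m n ℝ) (k : ℕ) : ℝ :=
  Real.sqrt (kthLargest (show (Aᵀ * A).IsHermitian by
    simpa only [Matrix.conjTranspose_eq_transpose_of_trivial] using
      Matrix.isHermitian_conjTranspose_mul_self A).eigenvalues k)

lemma Matrix.isHermitian_transpose_mul_self {m n : Type*} [Fintype m]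
    (A : Matrix m n ℝ) : (Aᵀ * A).IsHermitian := by
  simpa only [Matrix.conjTranspose_eq_transpose_of_trivial] using
    Matrix.isHermitian_conjTranspose_mul_self A

section KL
variable {ι : Type*} [Fintype ι] (f : ι → ℝ) (k : ℕ)

lemma kl_length : ((Finset.univ.val.map f).sort (· ≤ ·)).length = Fintype.card ι := by
  rw [Multiset.length_sort, Multiset.card_map]; rfl

lemma kl_sorted_le {l : List ℝ} (hsort : l.Pairwise (· ≤ ·)) {a b : ℕ} (hab : a ≤ b)
    (hb : b < l.length) : l[a]'(by omega) ≤ l[b] := by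
  have := hsort.rel_get_of_le (a := ⟨a, by omega⟩) (b := ⟨b, hb⟩) (by simpa using hab)
  simpa using this

lemma kl_mem (hk1 : 1 ≤ k) (hk2 : k ≤ Fintype.card ι) : ∃ i, kthLargest f k = f i := by
  have hlen := kl_length f
  have hlt : Fintype.card ι - k < ((Finset.univ.val.map f).sort (· ≤ ·)).length := by omega
  have : kthLargest f k ∈ ((Finset.univ.val.map f).sort (· ≤ ·)) := by
    rw [kthLargest, List.getD_eq_getElem _ _ hlt]; exact List.getElem_mem _
  rw [← Multiset.mem_coe, Multiset.sort_eq, Multiset.mem_map] at this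
  obtain ⟨i, _, hi⟩ := this
  exact ⟨i, hi.symm⟩

lemma kl_countP_to_filter (p : ℝ → Prop) [DecidablePred p] [DecidableEq ι] :
    ((Finset.univ.val.map f).sort (· ≤ ·)).countP (fun x => decide (p x))
      = (Finset.univ.filter (fun i => p (f i))).card := by
  rw [← Multiset.coe_countP, Multiset.sort_eq, Multiset.countP_map]
  rw [Finset.card_def, Finset.filter_val]
  try rw [Multiset.countP_eq_card_filter]

lemma kl_countP_ge [DecidableEq ι] (hk1 : 1 ≤ k) (hk2 : k ≤ Fintype.card ι) :
    k ≤ (Finset.univ.filter (fun i => kthLargest f k ≤ f i)).card := by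
  classical
  set l := ((Finset.univ.val.map f).sort (· ≤ ·)) with hl
  have hlen : l.length = Fintype.card ι := kl_length f
  have hsort : l.Pairwise (· ≤ ·) := Multiset.pairwise_sort _ _
  have hlt : Fintype.card ι - k < l.length := by omega
  have ht : kthLargest f k = l[Fintype.card ι - k] := List.getD_eq_getElem _ _ hlt
  rw [← kl_countP_to_filter f (fun x => kthLargest f k ≤ x)]
  have hdrop : ∀ x ∈ l.drop (Fintype.card ι - k), kthLargest f k ≤ x := by
    intro x hx
    obtain ⟨m, hm, hgx⟩ := List.getElem_of_mem hx
    rw [List.getElem_drop] at hgx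
    rw [ht, ← hgx]
    exact kl_sorted_le hsort (by omega) (by rw [List.length_drop] at hm; omega)
  calc k = (l.drop (Fintype.card ι - k)).length := by rw [List.length_drop]; omega
  _ = (l.drop (Fintype.card ι - k)).countP (fun x => decide (kthLargest f k ≤ x)) := by
        rw [eq_comm, List.countP_eq_length]; intro a ha; simpa using hdrop a ha
  _ ≤ l.countP (fun x => decide (kthLargest f k ≤ x)) := by
        conv_rhs => rw [← List.take_append_drop (Fintype.card ι - k) l]
        rw [List.countP_append]; omega

lemma kl_exists_upset [DecidableEq ι] (hk1 : 1 ≤ k) (hk2 : k ≤ Fintype.card ι) :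
    ∃ T : Finset ι, T.card = k ∧ ∀ i ∈ T, kthLargest f k ≤ f i := by
  obtain ⟨T, hT, hcard⟩ := Finset.exists_subset_card_eq (kl_countP_ge f k hk1 hk2)
  exact ⟨T, hcard, fun i hi => (Finset.mem_filter.1 (hT hi)).2⟩

lemma kl_countP_le [DecidableEq ι] (hk1 : 1 ≤ k) (hk2 : k ≤ Fintype.card ι) :
    Fintype.card ι - k + 1 ≤ (Finset.univ.filter (fun i => f i ≤ kthLargest f k)).card := by
  classical
  set l := ((Finset.univ.val.map f).sort (· ≤ ·)) with hl
  have hlen : l.length = Fintype.card ι := kl_length f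
  have hsort : l.Pairwise (· ≤ ·) := Multiset.pairwise_sort _ _
  have hlt : Fintype.card ι - k < l.length := by omega
  have ht : kthLargest f k = l[Fintype.card ι - k] := List.getD_eq_getElem _ _ hlt
  rw [← kl_countP_to_filter f (fun x => x ≤ kthLargest f k)]
  have htake : ∀ x ∈ l.take (Fintype.card ι - k + 1), x ≤ kthLargest f k := by
    intro x hx
    obtain ⟨m, hm, hgx⟩ := List.getElem_of_mem hx
    rw [List.getElem_take] at hgx
    rw [List.length_take] at hm
    rw [ht, ← hgx]
    exact kl_sorted_le hsort (by omega) hlt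
  calc Fintype.card ι - k + 1 = (l.take (Fintype.card ι - k + 1)).length := by
        rw [List.length_take]; omega
  _ = (l.take (Fintype.card ι - k + 1)).countP (fun x => decide (x ≤ kthLargest f k)) := by
        rw [eq_comm, List.countP_eq_length]; intro a ha; simpa using htake a ha
  _ ≤ l.countP (fun x => decide (x ≤ kthLargest f k)) := by
        conv_rhs => rw [← List.take_append_drop (Fintype.card ι - k + 1) l]
        rw [List.countP_append]; omega

lemma kl_min_le (hk : 1 ≤ Fintype.card ι) (i : ι) : kthLargest f (Fintype.card ι) ≤ f i := by
  classical
  set l := ((Finset.univ.val.map f).sort (· ≤ ·)) with hl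
  have hlen : l.length = Fintype.card ι := kl_length f
  have hsort : l.Pairwise (· ≤ ·) := Multiset.pairwise_sort _ _
  have hmem : f i ∈ l := by
    rw [hl, ← Multiset.mem_coe, Multiset.sort_eq, Multiset.mem_map]
    exact ⟨i, Finset.mem_univ i, rfl⟩
  obtain ⟨m, hm, hgx⟩ := List.getElem_of_mem hmem
  have h0 : 0 < l.length := by omega
  have ht : kthLargest f (Fintype.card ι) = l[0]'h0 := by
    rw [kthLargest, Nat.sub_self, ← hl]; exact List.getD_eq_getElem _ _ h0
  rw [ht, ← hgx]
  exact kl_sorted_le hsort (Nat.zero_le m) hm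
end KL

section SP
variable {ι : Type*} [Fintype ι] [DecidableEq ι] {H : Matrix ι ι ℝ} (hH : H.IsHermitian)

local notation "⟪" x ", " y "⟫" => @inner ℝ _ _ x y

lemma sp_repr_apply (x : EuclideanSpace ℝ ι) (i : ι) :
    hH.eigenvectorBasis.repr ((Matrix.toEuclideanLin H) x) i
      = hH.eigenvalues i * hH.eigenvectorBasis.repr x i := by
  rw [OrthonormalBasis.repr_apply_apply, OrthonormalBasis.repr_apply_apply]
  have hsym : (Matrix.toEuclideanLin H).IsSymmetric := Matrix.isHermitian_iff_isSymmetric.1 hH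
  rw [← hsym (hH.eigenvectorBasis i) x]
  have : (Matrix.toEuclideanLin H) (hH.eigenvectorBasis i)
      = hH.eigenvalues i • hH.eigenvectorBasis i := by
    apply (WithLp.equiv 2 (ι → ℝ)).injective
    rw [Matrix.toEuclideanLin_apply]
    exact hH.mulVec_eigenvectorBasis i
  rw [this, inner_smul_left]
  simp

lemma sp_inner_eq_sum (x y : EuclideanSpace ℝ ι) :
    ⟪x, y⟫ = ∑ i, hH.eigenvectorBasis.repr x i * hH.eigenvectorBasis.repr y i := by
  rw [← hH.eigenvectorBasis.repr.inner_map_map x y]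
  simp only [PiLp.inner_apply, RCLike.inner_apply, starRingEnd_apply, star_trivial]
  exact Finset.sum_congr rfl fun _ _ => mul_comm _ _

lemma sp_rayleigh_expand (x : EuclideanSpace ℝ ι) :
    ⟪x, (Matrix.toEuclideanLin H) x⟫
      = ∑ i, hH.eigenvalues i * (hH.eigenvectorBasis.repr x i)^2 := by
  rw [sp_inner_eq_sum hH]
  congr 1; ext i; rw [sp_repr_apply hH]; ring

lemma sp_repr_vanish (T : Finset ι) (x : EuclideanSpace ℝ ι)
    (hx : x ∈ Submodule.span ℝ (⇑hH.eigenvectorBasis '' ↑T)) {i : ι} (hi : i ∉ T) :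
    hH.eigenvectorBasis.repr x i = 0 := by
  rw [OrthonormalBasis.repr_apply_apply]
  induction hx using Submodule.span_induction with
  | mem y hy =>
      obtain ⟨j, hj, rfl⟩ := hy
      have : i ≠ j := fun h => hi (h ▸ hj)
      exact hH.eigenvectorBasis.orthonormal.2 this
  | zero => simp
  | add y z _ _ hy hz => rw [inner_add_right, hy, hz, add_zero]
  | smul a y _ hy => rw [inner_smul_right, hy, mul_zero]

lemma sp_rayleigh_ge (T : Finset ι) (t : ℝ) (hT : ∀ i ∈ T, t ≤ hH.eigenvalues i)
    (x : EuclideanSpace ℝ ι) (hx : x ∈ Submodule.span ℝ (⇑hH.eigenvectorBasis '' ↑T)) :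
    t * ⟪x, x⟫ ≤ ⟪x, (Matrix.toEuclideanLin H) x⟫ := by
  rw [sp_rayleigh_expand hH, sp_inner_eq_sum hH, Finset.mul_sum]
  apply Finset.sum_le_sum
  intro i _
  by_cases hi : i ∈ T
  · have h2 : (0:ℝ) ≤ (hH.eigenvectorBasis.repr x i)^2 := sq_nonneg _
    rw [← sq]
    exact mul_le_mul_of_nonneg_right (hT i hi) h2
  · rw [sp_repr_vanish hH T x hx hi]; simp

lemma sp_rayleigh_le (T : Finset ι) (t : ℝ) (hT : ∀ i ∈ T, hH.eigenvalues i ≤ t)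
    (x : EuclideanSpace ℝ ι) (hx : x ∈ Submodule.span ℝ (⇑hH.eigenvectorBasis '' ↑T)) :
    ⟪x, (Matrix.toEuclideanLin H) x⟫ ≤ t * ⟪x, x⟫ := by
  rw [sp_rayleigh_expand hH, sp_inner_eq_sum hH, Finset.mul_sum]
  apply Finset.sum_le_sum
  intro i _
  by_cases hi : i ∈ T
  · have h2 : (0:ℝ) ≤ (hH.eigenvectorBasis.repr x i)^2 := sq_nonneg _
    rw [← sq]
    exact mul_le_mul_of_nonneg_right (hT i hi) h2
  · rw [sp_repr_vanish hH T x hx hi]; simp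

lemma sp_span_dim (T : Finset ι) :
    Module.finrank ℝ (Submodule.span ℝ (⇑hH.eigenvectorBasis '' ↑T)) = T.card := by
  have hli : LinearIndependent ℝ (fun i : T => hH.eigenvectorBasis i) :=
    (hH.eigenvectorBasis.orthonormal.linearIndependent).comp Subtype.val Subtype.val_injective
  have himg : Set.range (fun i : T => hH.eigenvectorBasis i) = ⇑hH.eigenvectorBasis '' ↑T := by
    ext z; simp
  rw [← himg, finrank_span_eq_card hli, Fintype.card_coe]
end SP

section SV
local notation "⟪" x ", " y "⟫" => @inner ℝ _ _ x y

lemma dot_inner_eq {ι : Type*} [Fintype ι] (x y : EuclideanSpace ℝ ι) :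
    ⟪x, y⟫ = (WithLp.equiv 2 (ι → ℝ) x) ⬝ᵥ (WithLp.equiv 2 (ι → ℝ) y) := by
  simp only [PiLp.inner_apply, RCLike.inner_apply, starRingEnd_apply, star_trivial, dotProduct]
  exact Finset.sum_congr rfl fun _ _ => mul_comm _ _

lemma gram_dot {α β : Type*} [Fintype α] [Fintype β] (M : Matrix α β ℝ) (u : β → ℝ) :
    u ⬝ᵥ ((Mᴴ * M) *ᵥ u) = (M *ᵥ u) ⬝ᵥ (M *ᵥ u) := by
  have hct : Mᴴ = Mᵀ := by ext i j; simp [Matrix.conjTranspose_apply]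
  rw [hct, ← Matrix.mulVec_mulVec, Matrix.dotProduct_mulVec, Matrix.vecMul_transpose]

lemma dot_self_nonneg' {β : Type*} [Fintype β] (u : β → ℝ) : 0 ≤ u ⬝ᵥ u :=
  Finset.sum_nonneg fun i _ => mul_self_nonneg _

lemma dot_self_pos {β : Type*} [Fintype β] {u : β → ℝ} (hu : u ≠ 0) : 0 < u ⬝ᵥ u := by
  obtain ⟨i, hi⟩ := Function.ne_iff.1 hu
  rw [dotProduct]
  apply Finset.sum_pos' (fun j _ => mul_self_nonneg _)
  exact ⟨i, Finset.mem_univ i, by simpa [mul_self_pos] using hi⟩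

/-- Eckart–Young-type bound: if `rank X < k` and `M - X` is bounded by `c`, then `σ_k M ≤ c`. -/
lemma sv_le_of_rank_lt {α β : Type*} [Fintype α] [Fintype β] [DecidableEq β]
    (M X : Matrix α β ℝ) (k : ℕ) (hk1 : 1 ≤ k) (hk2 : k ≤ Fintype.card β)
    (hrank : X.rank < k) (c : ℝ) (hc : 0 ≤ c)
    (hX : ∀ u : β → ℝ, ((M - X) *ᵥ u) ⬝ᵥ ((M - X) *ᵥ u) ≤ c^2 * (u ⬝ᵥ u)) :
    singularValue M k ≤ c := by
  classical
  set hH := Matrix.isHermitian_transpose_mul_self M with hHdef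
  obtain ⟨T, hTcard, hT⟩ := kl_exists_upset hH.eigenvalues k hk1 hk2
  set V := Submodule.span ℝ (⇑hH.eigenvectorBasis '' ↑T) with hV
  set e := WithLp.linearEquiv 2 ℝ (β → ℝ) with he
  set K : Submodule ℝ (EuclideanSpace ℝ β) := LinearMap.ker (X.mulVecLin ∘ₗ e.toLinearMap) with hK
  have hdimV : Module.finrank ℝ V = k := by rw [hV, sp_span_dim, hTcard]
  have hdimK : Module.finrank ℝ K + X.rank = Fintype.card β := by
    have h2 : Module.finrank ℝ K = Module.finrank ℝ (LinearMap.ker X.mulVecLin) := by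
      rw [hK, LinearMap.ker_comp, Submodule.comap_equiv_eq_map_symm,
        LinearEquiv.finrank_map_eq]
    have h3 := LinearMap.finrank_range_add_finrank_ker (X.mulVecLin)
    have h4 : X.rank = Module.finrank ℝ (LinearMap.range X.mulVecLin) := rfl
    rw [Module.finrank_pi ℝ] at h3
    omega
  have hinter : ∃ x : EuclideanSpace ℝ β, x ∈ V ⊓ K ∧ x ≠ 0 := by
    apply Submodule.exists_mem_ne_zero_of_ne_bot
    intro hbot
    have h5 := Submodule.finrank_sup_add_finrank_inf_eq V K
    have h6 : Module.finrank ℝ ↥(V ⊔ K) ≤ Fintype.card β := by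
      have := Submodule.finrank_le (V ⊔ K)
      rwa [finrank_euclideanSpace] at this
    rw [hbot, finrank_bot] at h5
    omega
  obtain ⟨x, hxmem, hxne⟩ := hinter
  have hxV : x ∈ V := hxmem.1
  have hxK : X.mulVecLin (e x) = 0 := hxmem.2
  set t := kthLargest hH.eigenvalues k with ht
  have hray : t * ⟪x, x⟫ ≤ ⟪x, (Matrix.toEuclideanLin (Mᴴ * M)) x⟫ :=
    sp_rayleigh_ge hH T t hT x hxV
  have hexp : ⟪x, (Matrix.toEuclideanLin (Mᴴ * M)) x⟫ = (M *ᵥ (e x)) ⬝ᵥ (M *ᵥ (e x)) := by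
    rw [Matrix.toEuclideanLin_apply, dot_inner_eq]
    have h7 : (WithLp.equiv 2 (β → ℝ))
        ((WithLp.equiv 2 (β → ℝ)).symm ((Mᴴ * M) *ᵥ (WithLp.equiv 2 (β → ℝ)) x))
        = (Mᴴ * M) *ᵥ (WithLp.equiv 2 (β → ℝ)) x := (WithLp.equiv 2 (β → ℝ)).apply_symm_apply _
    exact gram_dot M (e x)
  have hMX : M *ᵥ (e x) = (M - X) *ᵥ (e x) := by
    rw [Matrix.sub_mulVec]
    have h8 : X *ᵥ (e x) = 0 := hxK
    rw [h8, sub_zero]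
  have hxx : ⟪x, x⟫ = (e x) ⬝ᵥ (e x) := dot_inner_eq x x
  have hpos : (0:ℝ) < (e x) ⬝ᵥ (e x) := dot_self_pos (fun h0 => hxne (e.map_eq_zero_iff.1 h0))
  have htc : t ≤ c^2 := by
    have hchain : t * ((e x) ⬝ᵥ (e x)) ≤ c^2 * ((e x) ⬝ᵥ (e x)) := by
      calc t * ((e x) ⬝ᵥ (e x)) = t * ⟪x, x⟫ := by rw [hxx]
      _ ≤ ⟪x, (Matrix.toEuclideanLin (Mᴴ * M)) x⟫ := hray
      _ = (M *ᵥ (e x)) ⬝ᵥ (M *ᵥ (e x)) := hexp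
      _ = ((M - X) *ᵥ (e x)) ⬝ᵥ ((M - X) *ᵥ (e x)) := by rw [← hMX]
      _ ≤ c^2 * ((e x) ⬝ᵥ (e x)) := hX (e x)
    exact le_of_mul_le_mul_right hchain hpos
  show Real.sqrt (kthLargest hH.eigenvalues k) ≤ c
  calc Real.sqrt (kthLargest hH.eigenvalues k) ≤ Real.sqrt (c^2) := Real.sqrt_le_sqrt htc
  _ = c := Real.sqrt_sq hc

/-- smallest singular value lower bound from a uniform Rayleigh bound -/
lemma sv_min_ge {ι : Type*} [Fintype ι] [DecidableEq ι] (B : Matrix ι ι ℝ) (c : ℝ) (hc : 0 ≤ c)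
    (h1 : 1 ≤ Fintype.card ι)
    (h : ∀ u : ι → ℝ, c^2 * (u ⬝ᵥ u) ≤ (B *ᵥ u) ⬝ᵥ (B *ᵥ u)) :
    c ≤ singularValue B (Fintype.card ι) := by
  classical
  set hH := Matrix.isHermitian_transpose_mul_self B with hHdef
  obtain ⟨i₀, hi₀⟩ := kl_mem hH.eigenvalues (Fintype.card ι) h1 le_rfl
  set v : ι → ℝ := (WithLp.equiv 2 (ι → ℝ)) (hH.eigenvectorBasis i₀) with hv
  have hunit : v ⬝ᵥ v = 1 := by
    rw [← dot_inner_eq]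
    rw [real_inner_self_eq_norm_sq, hH.eigenvectorBasis.orthonormal.1 i₀]
    norm_num
  have heig : (Bᴴ * B) *ᵥ v = hH.eigenvalues i₀ • v := hH.mulVec_eigenvectorBasis i₀
  have hray : v ⬝ᵥ ((Bᴴ * B) *ᵥ v) = hH.eigenvalues i₀ := by
    rw [heig, dotProduct_smul, hunit]; simp
  have h2 : c^2 ≤ hH.eigenvalues i₀ := by
    have h3 := h v
    rw [← gram_dot B v, hray, hunit, mul_one] at h3
    exact h3
  show c ≤ Real.sqrt (kthLargest hH.eigenvalues (Fintype.card ι))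
  rw [hi₀]
  calc c = Real.sqrt (c^2) := (Real.sqrt_sq hc).symm
  _ ≤ Real.sqrt (hH.eigenvalues i₀) := Real.sqrt_le_sqrt h2

/-- σ_k lower bound via a coordinate subspace -/
lemma sv_ge_coord {α ι κ : Type*} [Fintype α] [Fintype ι] [Fintype κ] [DecidableEq ι]
    [DecidableEq κ] (M : Matrix α (ι ⊕ κ) ℝ) (c : ℝ) (hc : 0 ≤ c) (h1 : 1 ≤ Fintype.card ι)
    (h : ∀ y : ι → ℝ, c^2 * (y ⬝ᵥ y) ≤ (M *ᵥ Sum.elim y 0) ⬝ᵥ (M *ᵥ Sum.elim y 0)) :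
    c ≤ singularValue M (Fintype.card ι) := by
  classical
  set hH := Matrix.isHermitian_transpose_mul_self M with hHdef
  set k := Fintype.card ι with hkdef
  have hk2 : k ≤ Fintype.card (ι ⊕ κ) := by rw [Fintype.card_sum]; omega
  set t := kthLargest hH.eigenvalues k with ht
  set T : Finset (ι ⊕ κ) := Finset.univ.filter (fun i => hH.eigenvalues i ≤ t) with hT
  have hTcard : Fintype.card (ι ⊕ κ) - k + 1 ≤ T.card := kl_countP_le _ k h1 hk2
  set W := Submodule.span ℝ (⇑hH.eigenvectorBasis '' ↑T) with hW
  set e := WithLp.linearEquiv 2 ℝ (ι ⊕ κ → ℝ) with he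
  set L : (ι → ℝ) →ₗ[ℝ] (ι ⊕ κ → ℝ) :=
    { toFun := fun y => Sum.elim y 0
      map_add' := by intro a b; ext (i|j) <;> simp
      map_smul' := by intro a b; ext (i|j) <;> simp } with hL
  set V : Submodule ℝ (EuclideanSpace ℝ (ι ⊕ κ)) := LinearMap.range (e.symm.toLinearMap ∘ₗ L) with hV
  have hdimV : Module.finrank ℝ V = k := by
    rw [hV]
    have hinj : Function.Injective (e.symm.toLinearMap ∘ₗ L) := by
      intro a b hab
      have hab2 : e.symm (L a) = e.symm (L b) := hab
      have h2 : L a = L b := e.symm.injective hab2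
      have h2' : Sum.elim a (0 : κ → ℝ) = Sum.elim b 0 := h2
      funext i
      exact congrFun h2' (Sum.inl i)
    rw [LinearMap.finrank_range_of_inj hinj, Module.finrank_pi]
  have hdimW : Module.finrank ℝ W = T.card := sp_span_dim hH T
  have hinter : ∃ x : EuclideanSpace ℝ (ι ⊕ κ), x ∈ V ⊓ W ∧ x ≠ 0 := by
    apply Submodule.exists_mem_ne_zero_of_ne_bot
    intro hbot
    have h5 := Submodule.finrank_sup_add_finrank_inf_eq V W
    have h6 : Module.finrank ℝ ↥(V ⊔ W) ≤ Fintype.card (ι ⊕ κ) := by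
      have := Submodule.finrank_le (V ⊔ W)
      rwa [finrank_euclideanSpace] at this
    rw [hbot, finrank_bot] at h5
    omega
  obtain ⟨x, hxmem, hxne⟩ := hinter
  obtain ⟨y, hy⟩ := hxmem.1
  have hyx : Sum.elim y 0 = e x := by
    have h2 : e.symm (L y) = x := hy
    have h3 : L y = e x := by rw [← h2]; exact (e.apply_symm_apply _).symm
    exact h3
  have hray : ⟪x, (Matrix.toEuclideanLin (Mᴴ * M)) x⟫ ≤ t * ⟪x, x⟫ :=
    sp_rayleigh_le hH T t (fun i hi => (Finset.mem_filter.1 hi).2) x hxmem.2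
  have hexp : ⟪x, (Matrix.toEuclideanLin (Mᴴ * M)) x⟫ = (M *ᵥ (e x)) ⬝ᵥ (M *ᵥ (e x)) := by
    rw [Matrix.toEuclideanLin_apply, dot_inner_eq]
    have h7 : (WithLp.equiv 2 (ι ⊕ κ → ℝ))
        ((WithLp.equiv 2 (ι ⊕ κ → ℝ)).symm ((Mᴴ * M) *ᵥ (WithLp.equiv 2 (ι ⊕ κ → ℝ)) x))
        = (Mᴴ * M) *ᵥ (WithLp.equiv 2 (ι ⊕ κ → ℝ)) x :=
      (WithLp.equiv 2 (ι ⊕ κ → ℝ)).apply_symm_apply _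
    exact gram_dot M (e x)
  have hxx : ⟪x, x⟫ = (e x) ⬝ᵥ (e x) := dot_inner_eq x x
  have hyy : (e x) ⬝ᵥ (e x) = y ⬝ᵥ y := by
    rw [← hyx, dotProduct, Fintype.sum_sum_type]
    simp [dotProduct]
  have hyne : y ≠ 0 := by
    intro h0
    apply hxne
    apply e.map_eq_zero_iff.1
    rw [← hyx, h0]
    funext z; cases z <;> simp
  have hypos : (0:ℝ) < y ⬝ᵥ y := dot_self_pos hyne
  have htc : c^2 ≤ t := by
    have hchain : c^2 * (y ⬝ᵥ y) ≤ t * (y ⬝ᵥ y) := by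
      calc c^2 * (y ⬝ᵥ y) ≤ (M *ᵥ Sum.elim y 0) ⬝ᵥ (M *ᵥ Sum.elim y 0) := h y
      _ = (M *ᵥ (e x)) ⬝ᵥ (M *ᵥ (e x)) := by rw [hyx]
      _ = ⟪x, (Matrix.toEuclideanLin (Mᴴ * M)) x⟫ := hexp.symm
      _ ≤ t * ⟪x, x⟫ := hray
      _ = t * (y ⬝ᵥ y) := by rw [hxx, hyy]
    exact le_of_mul_le_mul_right hchain hypos
  show c ≤ Real.sqrt (kthLargest hH.eigenvalues k)
  calc c = Real.sqrt (c^2) := (Real.sqrt_sq hc).symm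
  _ ≤ Real.sqrt (kthLargest hH.eigenvalues k) := Real.sqrt_le_sqrt htc
end SV

/-- equivalence sending the subtype to `Fin k` with the removed point mapped from `Unit`. -/
def epunit {k : ℕ} (j : Fin k) : ({l : Fin k // l ≠ j} ⊕ Unit) ≃ Fin k where
  toFun := Sum.elim Subtype.val (fun _ => j)
  invFun := fun x => if h : x = j then Sum.inr () else Sum.inl ⟨x, h⟩
  left_inv := by
    rintro (a | u)
    · simp [a.prop]
    · simp
  right_inv := by intro x; by_cases h : x = j <;> simp [h]

/-- Cauchy–Schwarz / Frobenius bound for matrix–vector multiplication. -/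
lemma frob_bound {a b : Type*} [Fintype a] [Fintype b] (E : Matrix a b ℝ) (F : ℝ)
    (hF : ∑ r, ∑ c, (E r c)^2 ≤ F) (u : b → ℝ) :
    (E *ᵥ u) ⬝ᵥ (E *ᵥ u) ≤ F * (u ⬝ᵥ u) := by
  have husq : u ⬝ᵥ u = ∑ c, (u c)^2 := by
    rw [dotProduct]; congr 1; ext c; ring
  have h1 : (E *ᵥ u) ⬝ᵥ (E *ᵥ u) = ∑ r, (∑ c, E r c * u c)^2 := by
    rw [dotProduct]; congr 1; ext r; rw [Matrix.mulVec, dotProduct]; ring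
  rw [h1, husq]
  have h2 : ∀ r, (∑ c, E r c * u c)^2 ≤ (∑ c, (E r c)^2) * ∑ c, (u c)^2 := fun r =>
    Finset.sum_mul_sq_le_sq_mul_sq Finset.univ _ _
  calc ∑ r, (∑ c, E r c * u c)^2 ≤ ∑ r, (∑ c, (E r c)^2) * ∑ c, (u c)^2 :=
        Finset.sum_le_sum (fun r _ => h2 r)
  _ = (∑ r, ∑ c, (E r c)^2) * ∑ c, (u c)^2 := by rw [Finset.sum_mul]
  _ ≤ F * ∑ c, (u c)^2 := by
      apply mul_le_mul_of_nonneg_right hF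
      exact Finset.sum_nonneg (fun c _ => sq_nonneg _)

section Dagger
variable {k m₂ n₂ : ℕ}
    (A₁₁ : Matrix (Fin k) (Fin k) ℝ) (A₁₂ : Matrix (Fin k) (Fin n₂) ℝ)
    (A₂₁ : Matrix (Fin m₂) (Fin k) ℝ) (A₂₂ : Matrix (Fin m₂) (Fin n₂) ℝ)
    (ρ : ℝ) (hρ : 1 ≤ ρ)
    (hcol : ∀ (q : Fin n₂) (j : Fin k),
      |(A₁₁.updateCol j (fun i => A₁₂ i q)).det| ≤ ρ * |A₁₁.det|)
    (hrow : ∀ (p : Fin m₂) (i : Fin k),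
      |(A₁₁.updateRow i (fun j => A₂₁ p j)).det| ≤ ρ * |A₁₁.det|)
    (hloc : ∀ (p : Fin m₂) (q : Fin n₂) (r c : Fin k → Fin k ⊕ Unit),
      Function.Injective r → Function.Injective c →
      |((Matrix.fromBlocks A₁₁ (Matrix.of fun i (_ : Unit) => A₁₂ i q)
          (Matrix.of fun (_ : Unit) j => A₂₁ p j)
          (Matrix.of fun (_ : Unit) (_ : Unit) => A₂₂ p q)).submatrix r c).det|
        ≤ ρ * |A₁₁.det|)

include hρ hcol hrow hloc in
lemma dagger (i j : Fin k) :
    |(A₁₁.updateRow j (Pi.single i 1)).det|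
        * singularValue (Matrix.fromBlocks A₁₁ A₁₂ A₂₁ A₂₂) k
      ≤ ρ * Real.sqrt (((m₂:ℝ)+1)*((n₂:ℝ)+1)) * |A₁₁.det| := by
  classical
  have hρ0 : (0:ℝ) < ρ := lt_of_lt_of_le one_pos hρ
  have hrhs0 : 0 ≤ ρ * Real.sqrt (((m₂:ℝ)+1)*((n₂:ℝ)+1)) * |A₁₁.det| := by positivity
  set M := Matrix.fromBlocks A₁₁ A₁₂ A₂₁ A₂₂ with hM
  -- column-index bijection for the minor
  have hcards : Fintype.card {l : Fin k // l ≠ j} = Fintype.card {l : Fin k // l ≠ i} := by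
    simp [Fintype.card_subtype_compl]
  set ce : {l : Fin k // l ≠ j} ≃ {l : Fin k // l ≠ i} := Fintype.equivOfCardEq hcards with hce
  set B'' : Matrix {l : Fin k // l ≠ j} {l : Fin k // l ≠ j} ℝ :=
    Matrix.of (fun a b => A₁₁ a.val (ce b).val) with hB''
  set colEq : ({l : Fin k // l ≠ j} ⊕ Unit) ≃ Fin k :=
    (Equiv.sumCongr ce (Equiv.refl Unit)).trans (epunit i) with hcolEq
  -- step 1 : relate the adjugate determinant to the minor
  have habs : |(A₁₁.updateRow j (Pi.single i 1)).det| = |B''.det| := by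
    have hV : (A₁₁.updateRow j (Pi.single i 1)).submatrix (epunit j) colEq
        = Matrix.fromBlocks B'' (Matrix.of fun a (_ : Unit) => A₁₁ a.val i)
            (0 : Matrix Unit {l : Fin k // l ≠ j} ℝ) (1 : Matrix Unit Unit ℝ) := by
      ext r c
      rcases r with a | u <;> rcases c with b | u'
      · simp [Matrix.submatrix_apply, epunit, hcolEq, Matrix.updateRow_ne a.prop,
          Matrix.fromBlocks_apply₁₁, hB'', Equiv.sumCongr_apply]
      · simp [Matrix.submatrix_apply, epunit, hcolEq, Matrix.updateRow_ne a.prop,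
          Matrix.fromBlocks_apply₁₂]
      · simp [Matrix.submatrix_apply, epunit, hcolEq, Matrix.updateRow_self,
          Matrix.fromBlocks_apply₂₁, Equiv.sumCongr_apply,
          Pi.single_eq_of_ne (ce b).prop]
      · simp [Matrix.submatrix_apply, epunit, hcolEq, Matrix.updateRow_self,
          Matrix.fromBlocks_apply₂₂, Pi.single_eq_same, Matrix.one_apply]
    have h1 := Matrix.abs_det_submatrix_equiv_equiv (epunit j) colEq
        (A₁₁.updateRow j (Pi.single i 1))
    rw [hV] at h1
    rw [← h1, Matrix.det_fromBlocks_zero₂₁, Matrix.det_one, mul_one]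
  rw [habs]
  by_cases hdet : B''.det = 0
  · rw [hdet, abs_zero, zero_mul]; exact hrhs0
  have hudet : IsUnit B''.det := Ne.isUnit hdet
  haveI : Invertible B'' := B''.invertibleOfIsUnitDet hudet
  have hdet0 : (0:ℝ) < |B''.det| := abs_pos.2 hdet
  set s := ρ * |A₁₁.det| / |B''.det| with hs
  have hs0 : 0 ≤ s := by positivity
  set Ccols : Matrix (Fin k ⊕ Fin m₂) {l : Fin k // l ≠ j} ℝ :=
    Matrix.of (fun r b => M r (Sum.inl (ce b).val)) with hCcols
  set Rrows : Matrix {l : Fin k // l ≠ j} (Fin k ⊕ Fin n₂) ℝ :=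
    Matrix.of (fun a c => M (Sum.inl a.val) c) with hRrows
  set X := Ccols * B''⁻¹ * Rrows with hXdef
  set E := M - X with hEdef
  -- E vanishes on rows `inl a`, `a ≠ j`
  have hE1 : ∀ (a : Fin k) (ha : a ≠ j) (c : Fin k ⊕ Fin n₂), E (Sum.inl a) c = 0 := by
    intro a ha c
    have hCB : ∀ b, (Ccols * B''⁻¹) (Sum.inl a) b = (1 : Matrix {l : Fin k // l ≠ j} {l : Fin k // l ≠ j} ℝ) ⟨a, ha⟩ b := by
      intro b
      have h1 : (B'' * B''⁻¹) ⟨a, ha⟩ b = (1 : Matrix {l : Fin k // l ≠ j} {l : Fin k // l ≠ j} ℝ) ⟨a, ha⟩ b := by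
        rw [Matrix.mul_nonsing_inv _ hudet]
      rw [← h1, Matrix.mul_apply, Matrix.mul_apply]
      apply Finset.sum_congr rfl
      intro b' _
      congr 1
    have hXa : X (Sum.inl a) c = M (Sum.inl a) c := by
      rw [hXdef, Matrix.mul_apply]
      simp_rw [hCB]
      simp [Matrix.one_apply, ite_mul, Finset.sum_ite_eq]
      rfl
    rw [hEdef, Matrix.sub_apply, hXa, sub_self]
  -- E vanishes on columns `inl b`, `b ≠ i`
  have hE2 : ∀ (r : Fin k ⊕ Fin m₂) (b : Fin k) (hb : b ≠ i), E r (Sum.inl b) = 0 := by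
    intro r b hb
    have hBR : ∀ b', (B''⁻¹ * Rrows) b' (Sum.inl b) = (1 : Matrix {l : Fin k // l ≠ j} {l : Fin k // l ≠ j} ℝ) b' (ce.symm ⟨b, hb⟩) := by
      intro b'
      have h1 : (B''⁻¹ * B'') b' (ce.symm ⟨b, hb⟩) = (1 : Matrix {l : Fin k // l ≠ j} {l : Fin k // l ≠ j} ℝ) b' (ce.symm ⟨b, hb⟩) := by
        rw [Matrix.nonsing_inv_mul _ hudet]
      rw [← h1, Matrix.mul_apply, Matrix.mul_apply]
      apply Finset.sum_congr rfl
      intro a _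
      congr 1
      show M (Sum.inl a.val) (Sum.inl b) = A₁₁ a.val (ce (ce.symm ⟨b, hb⟩)).val
      rw [Equiv.apply_symm_apply]
      rfl
    have hXb : X r (Sum.inl b) = M r (Sum.inl b) := by
      rw [hXdef, Matrix.mul_assoc, Matrix.mul_apply]
      simp_rw [hBR]
      simp [Matrix.one_apply, mul_ite, Finset.sum_ite_eq']
      show M r (Sum.inl (ce (ce.symm ⟨b, hb⟩)).val) = M r (Sum.inl b)
      rw [Equiv.apply_symm_apply]
    rw [hEdef, Matrix.sub_apply, hXb, sub_self]
  -- live entries are bounded via the bordered determinants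
  have hdetE : ∀ (r : Fin k ⊕ Fin m₂) (c : Fin k ⊕ Fin n₂),
      B''.det * E r c
        = (Matrix.fromBlocks B'' (Matrix.of fun a (_ : Unit) => M (Sum.inl a.val) c)
            (Matrix.of fun (_ : Unit) b => M r (Sum.inl (ce b).val))
            (Matrix.of fun (_ : Unit) (_ : Unit) => M r c)).det := by
    intro r c
    rw [Matrix.det_fromBlocks₁₁]
    congr 1
    rw [Matrix.det_unique]
    have hinv : (⅟B'' : Matrix _ _ ℝ) = B''⁻¹ := invOf_eq_nonsing_inv B''
    rw [Matrix.sub_apply, hinv]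
    have hXrc : ((Matrix.of (fun (_ : Unit) (b : {l : Fin k // l ≠ j}) => M r (Sum.inl (ce b).val)) : Matrix Unit {l : Fin k // l ≠ j} ℝ) * B''⁻¹
        * (Matrix.of (fun (a : {l : Fin k // l ≠ j}) (_ : Unit) => M (Sum.inl a.val) c) : Matrix {l : Fin k // l ≠ j} Unit ℝ)) default default = X r c := rfl
    rw [hXrc, hEdef, Matrix.sub_apply]
    rfl
  have hlive : ∀ (r : Fin k ⊕ Fin m₂) (c : Fin k ⊕ Fin n₂),
      (r = Sum.inl j ∨ ∃ p, r = Sum.inr p) → (c = Sum.inl i ∨ ∃ q, c = Sum.inr q) →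
      |E r c| ≤ s := by
    intro r c hr hc
    rw [hs, le_div_iff₀ hdet0]
    have habsW : |E r c| * |B''.det| = |B''.det * E r c| := by
      rw [abs_mul]; ring
    rw [habsW, hdetE r c]
    rcases hr with rfl | ⟨p, rfl⟩ <;> rcases hc with rfl | ⟨q, rfl⟩
    · -- original matrix
      have hW : (Matrix.fromBlocks B''
            (Matrix.of fun a (_ : Unit) => M (Sum.inl a.val) (Sum.inl i))
            (Matrix.of fun (_ : Unit) b => M (Sum.inl j) (Sum.inl (ce b).val))
            (Matrix.of fun (_ : Unit) (_ : Unit) => M (Sum.inl j) (Sum.inl i)))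
          = A₁₁.submatrix (epunit j) colEq := by
        ext r' c'
        rcases r' with a | u <;> rcases c' with b | u' <;>
          simp [Matrix.submatrix_apply, epunit, hcolEq, Equiv.sumCongr_apply, hB'', hM]
      rw [hW, Matrix.abs_det_submatrix_equiv_equiv]
      exact le_mul_of_one_le_left (abs_nonneg _) hρ
    · -- column swap
      have hW : (Matrix.fromBlocks B''
            (Matrix.of fun a (_ : Unit) => M (Sum.inl a.val) (Sum.inr q))
            (Matrix.of fun (_ : Unit) b => M (Sum.inl j) (Sum.inl (ce b).val))
            (Matrix.of fun (_ : Unit) (_ : Unit) => M (Sum.inl j) (Sum.inr q)))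
          = (A₁₁.updateCol i (fun l => A₁₂ l q)).submatrix (epunit j) colEq := by
        ext r' c'
        rcases r' with a | u <;> rcases c' with b | u'
        · simp [Matrix.submatrix_apply, epunit, hcolEq, Equiv.sumCongr_apply, hB'', hM,
            Matrix.updateCol_ne (ce b).prop]
        · simp [Matrix.submatrix_apply, epunit, hcolEq, hM, Matrix.updateCol_self]
        · simp [Matrix.submatrix_apply, epunit, hcolEq, Equiv.sumCongr_apply, hM,
            Matrix.updateCol_ne (ce b).prop]
        · simp [Matrix.submatrix_apply, epunit, hcolEq, hM, Matrix.updateCol_self]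
      rw [hW, Matrix.abs_det_submatrix_equiv_equiv]
      exact hcol q i
    · -- row swap
      have hW : (Matrix.fromBlocks B''
            (Matrix.of fun a (_ : Unit) => M (Sum.inl a.val) (Sum.inl i))
            (Matrix.of fun (_ : Unit) b => M (Sum.inr p) (Sum.inl (ce b).val))
            (Matrix.of fun (_ : Unit) (_ : Unit) => M (Sum.inr p) (Sum.inl i)))
          = (A₁₁.updateRow j (fun l => A₂₁ p l)).submatrix (epunit j) colEq := by
        ext r' c'
        rcases r' with a | u <;> rcases c' with b | u'
        · simp [Matrix.submatrix_apply, epunit, hcolEq, Equiv.sumCongr_apply, hB'', hM,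
            Matrix.updateRow_ne a.prop]
        · simp [Matrix.submatrix_apply, epunit, hcolEq, hM, Matrix.updateRow_ne a.prop]
        · simp [Matrix.submatrix_apply, epunit, hcolEq, Equiv.sumCongr_apply, hM,
            Matrix.updateRow_self]
        · simp [Matrix.submatrix_apply, epunit, hcolEq, hM, Matrix.updateRow_self]
      rw [hW, Matrix.abs_det_submatrix_equiv_equiv]
      exact hrow p j
    · -- simultaneous swap, via hloc
      set hlocM : Matrix (Fin k ⊕ Unit) (Fin k ⊕ Unit) ℝ :=
        Matrix.fromBlocks A₁₁ (Matrix.of fun l (_ : Unit) => A₁₂ l q)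
          (Matrix.of fun (_ : Unit) l => A₂₁ p l)
          (Matrix.of fun (_ : Unit) (_ : Unit) => A₂₂ p q) with hhlocM
      set rmap : Fin k → Fin k ⊕ Unit :=
        (Sum.map Subtype.val id) ∘ (epunit j).symm with hrmap
      set cmap : Fin k → Fin k ⊕ Unit :=
        (Sum.map (fun b => (ce b).val) id) ∘ colEq.symm with hcmap
      have hrinj : Function.Injective rmap := by
        apply Function.Injective.comp _ (epunit j).symm.injective
        intro x y hxy
        rcases x with x | x <;> rcases y with y | y <;> simp_all [Sum.map]
        · exact Subtype.ext hxy
      have hcinj : Function.Injective cmap := by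
        apply Function.Injective.comp _ colEq.symm.injective
        intro x y hxy
        rcases x with x | x <;> rcases y with y | y <;> simp_all [Sum.map]
        · exact ce.injective (Subtype.ext hxy)
      have hWsub : (Matrix.fromBlocks B''
            (Matrix.of fun a (_ : Unit) => M (Sum.inl a.val) (Sum.inr q))
            (Matrix.of fun (_ : Unit) b => M (Sum.inr p) (Sum.inl (ce b).val))
            (Matrix.of fun (_ : Unit) (_ : Unit) => M (Sum.inr p) (Sum.inr q)))
          = hlocM.submatrix (Sum.map Subtype.val id) (Sum.map (fun b => (ce b).val) id) := by
        ext r' c'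
        rcases r' with a | u <;> rcases c' with b | u' <;>
          simp [Matrix.submatrix_apply, hhlocM, hB'', hM, Sum.map]
      rw [hWsub]
      have hresub : hlocM.submatrix rmap cmap
          = (hlocM.submatrix (Sum.map Subtype.val id)
              (Sum.map (fun b => (ce b).val) id)).submatrix ⇑(epunit j).symm ⇑colEq.symm := by
        rw [Matrix.submatrix_submatrix]
        try rfl
      have h2 := Matrix.abs_det_submatrix_equiv_equiv (epunit j).symm colEq.symm
        (hlocM.submatrix (Sum.map Subtype.val id) (Sum.map (fun b => (ce b).val) id))
      rw [← hresub] at h2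
      rw [← h2]
      exact hloc p q rmap cmap hrinj hcinj
  -- Frobenius bound for `E`
  have hsqlive : ∀ (r : Fin k ⊕ Fin m₂) (c : Fin k ⊕ Fin n₂),
      (r = Sum.inl j ∨ ∃ p, r = Sum.inr p) → (c = Sum.inl i ∨ ∃ q, c = Sum.inr q) →
      (E r c)^2 ≤ s^2 := by
    intro r c hr hc
    rw [← sq_abs]
    exact pow_le_pow_left₀ (abs_nonneg _) (hlive r c hr hc) 2
  have hcolsum : ∀ (r : Fin k ⊕ Fin m₂), (r = Sum.inl j ∨ ∃ p, r = Sum.inr p) →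
      ∑ c, (E r c)^2 ≤ ((n₂:ℝ)+1) * s^2 := by
    intro r hr
    rw [Fintype.sum_sum_type]
    have h1 : ∑ b : Fin k, (E r (Sum.inl b))^2 ≤ s^2 := by
      rw [Finset.sum_eq_single i]
      · exact hsqlive r (Sum.inl i) hr (Or.inl rfl)
      · intro b _ hb; rw [hE2 r b hb]; norm_num
      · intro hni; exact absurd (Finset.mem_univ i) hni
    have h2 : ∑ q : Fin n₂, (E r (Sum.inr q))^2 ≤ (n₂:ℝ) * s^2 := by
      calc ∑ q : Fin n₂, (E r (Sum.inr q))^2 ≤ ∑ _q : Fin n₂, s^2 :=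
            Finset.sum_le_sum (fun q _ => hsqlive r (Sum.inr q) hr (Or.inr ⟨q, rfl⟩))
      _ = (n₂:ℝ) * s^2 := by simp [Finset.sum_const, nsmul_eq_mul]
    linarith
  have htotal : ∑ r, ∑ c, (E r c)^2 ≤ ((m₂:ℝ)+1) * (((n₂:ℝ)+1) * s^2) := by
    rw [Fintype.sum_sum_type]
    have h1 : ∑ a : Fin k, ∑ c, (E (Sum.inl a) c)^2 ≤ ((n₂:ℝ)+1) * s^2 := by
      rw [Finset.sum_eq_single j]
      · exact hcolsum (Sum.inl j) (Or.inl rfl)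
      · intro a _ ha
        apply Finset.sum_eq_zero
        intro c _
        rw [hE1 a ha c]; norm_num
      · intro hnj; exact absurd (Finset.mem_univ j) hnj
    have h2 : ∑ p : Fin m₂, ∑ c, (E (Sum.inr p) c)^2 ≤ (m₂:ℝ) * (((n₂:ℝ)+1) * s^2) := by
      calc ∑ p : Fin m₂, ∑ c, (E (Sum.inr p) c)^2
          ≤ ∑ _p : Fin m₂, ((n₂:ℝ)+1) * s^2 :=
            Finset.sum_le_sum (fun p _ => hcolsum (Sum.inr p) (Or.inr ⟨p, rfl⟩))
      _ = (m₂:ℝ) * (((n₂:ℝ)+1) * s^2) := by simp [Finset.sum_const, nsmul_eq_mul]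
    linarith
  -- apply the Eckart–Young bound
  have hk1 : 1 ≤ k := Fin.pos i
  have hk2 : k ≤ Fintype.card (Fin k ⊕ Fin n₂) := by simp
  have hrank : X.rank < k := by
    have h1 : X.rank ≤ (Ccols * B''⁻¹).rank := Matrix.rank_mul_le_left _ _
    have h2 : (Ccols * B''⁻¹).rank ≤ (B''⁻¹).rank := Matrix.rank_mul_le_right _ _
    have h3 : (B''⁻¹).rank ≤ Fintype.card {l : Fin k // l ≠ j} :=
      Matrix.rank_le_card_width _
    have h4 : Fintype.card {l : Fin k // l ≠ j} < Fintype.card (Fin k) :=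
      Fintype.card_subtype_lt (x := j) (by simp)
    rw [Fintype.card_fin] at h4
    omega
  set c0 := Real.sqrt (((m₂:ℝ)+1)*((n₂:ℝ)+1)) * s with hc0def
  have hc0 : 0 ≤ c0 := by positivity
  have hc0sq : c0^2 = ((m₂:ℝ)+1) * (((n₂:ℝ)+1) * s^2) := by
    rw [hc0def, mul_pow, Real.sq_sqrt (by positivity)]; ring
  have hsv : singularValue M k ≤ c0 := by
    apply sv_le_of_rank_lt M X k hk1 hk2 hrank c0 hc0
    intro u
    rw [hc0sq]
    exact frob_bound E _ htotal u
  calc |B''.det| * singularValue M k ≤ |B''.det| * c0 :=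
        mul_le_mul_of_nonneg_left hsv (abs_nonneg _)
  _ = ρ * Real.sqrt (((m₂:ℝ)+1)*((n₂:ℝ)+1)) * |A₁₁.det| := by
      rw [hc0def, hs]
      field_simp

end Dagger

/-- minimum eigenvalue of the Gram matrix bounds the Rayleigh quotient below -/
lemma rayleigh_min {ι : Type*} [Fintype ι] [DecidableEq ι] (B : Matrix ι ι ℝ)
    (h1 : 1 ≤ Fintype.card ι) (u : ι → ℝ) :
    kthLargest (Matrix.isHermitian_transpose_mul_self B).eigenvalues (Fintype.card ι) * (u ⬝ᵥ u)
      ≤ (B *ᵥ u) ⬝ᵥ (B *ᵥ u) := by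
  classical
  set hH := Matrix.isHermitian_transpose_mul_self B with hHdef
  set t := kthLargest hH.eigenvalues (Fintype.card ι) with ht
  set x : EuclideanSpace ℝ ι := (WithLp.equiv 2 (ι → ℝ)).symm u with hx
  have hmem : x ∈ Submodule.span ℝ (⇑hH.eigenvectorBasis '' ↑(Finset.univ : Finset ι)) := by
    have himg : (⇑hH.eigenvectorBasis '' ↑(Finset.univ : Finset ι))
        = Set.range hH.eigenvectorBasis := by
      rw [Finset.coe_univ, Set.image_univ]
    rw [himg]
    have hsp : Submodule.span ℝ (Set.range ⇑hH.eigenvectorBasis) = ⊤ := by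
      rw [← OrthonormalBasis.coe_toBasis, Module.Basis.span_eq]
    rw [hsp]; trivial
  have h2 := sp_rayleigh_ge hH Finset.univ t
    (fun i _ => kl_min_le hH.eigenvalues h1 i) x hmem
  have heu : (WithLp.equiv 2 (ι → ℝ)) x = u := by
    rw [hx]; exact (WithLp.equiv 2 (ι → ℝ)).apply_symm_apply u
  have hxx : @inner ℝ _ _ x x = u ⬝ᵥ u := by rw [dot_inner_eq, heu]
  have hexp : @inner ℝ _ _ x ((Matrix.toEuclideanLin (Bᴴ * B)) x) = (B *ᵥ u) ⬝ᵥ (B *ᵥ u) := by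
    rw [Matrix.toEuclideanLin_apply, dot_inner_eq]
    rw [(WithLp.equiv 2 (ι → ℝ)).apply_symm_apply]
    exact gram_dot B u
  rw [← hxx, ← hexp]
  exact h2

/-- Let `A = [[A₁₁, A₁₂], [A₂₁, A₂₂]]` be an `m × n` real matrix whose leading `k × k` block
`A₁₁` is nonsingular and has local `ρ`-maximum volume in `A` for some `ρ ≥ 1`: exchanging
one column of `A₁₁` with a column of `A₁₂`, one row of `A₁₁` with a row of `A₂₁`, or one
row and one column simultaneously (equivalently, `A₁₁` has global `ρ`-maximum volume in
every `(k+1) × (k+1)` submatrix of `A` containing it) cannot increase the volume of `A₁₁`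
by more than the factor `ρ`.  Then `σ_k(A) ≥ σ_min(A₁₁) ≥ σ_k(A) / (ρ k √((m−k+1)(n−k+1)))`,
where `σ_min(A₁₁) = σ_k(A₁₁)` is the smallest singular value of `A₁₁`. -/
theorem sigma_min_bounds_of_local_maxvol {k m₂ n₂ : ℕ}
    (A₁₁ : Matrix (Fin k) (Fin k) ℝ) (A₁₂ : Matrix (Fin k) (Fin n₂) ℝ)
    (A₂₁ : Matrix (Fin m₂) (Fin k) ℝ) (A₂₂ : Matrix (Fin m₂) (Fin n₂) ℝ)
    (hA : IsUnit A₁₁.det) (ρ : ℝ) (hρ : 1 ≤ ρ)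
    (hcol : ∀ (q : Fin n₂) (j : Fin k),
      |(A₁₁.updateCol j (fun i => A₁₂ i q)).det| ≤ ρ * |A₁₁.det|)
    (hrow : ∀ (p : Fin m₂) (i : Fin k),
      |(A₁₁.updateRow i (fun j => A₂₁ p j)).det| ≤ ρ * |A₁₁.det|)
    (hloc : ∀ (p : Fin m₂) (q : Fin n₂) (r c : Fin k → Fin k ⊕ Unit),
      Function.Injective r → Function.Injective c →
      |((Matrix.fromBlocks A₁₁ (Matrix.of fun i (_ : Unit) => A₁₂ i q)
          (Matrix.of fun (_ : Unit) j => A₂₁ p j)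
          (Matrix.of fun (_ : Unit) (_ : Unit) => A₂₂ p q)).submatrix r c).det|
        ≤ ρ * |A₁₁.det|) :
    singularValue (Matrix.fromBlocks A₁₁ A₁₂ A₂₁ A₂₂) k ≥ singularValue A₁₁ k ∧
    singularValue A₁₁ k ≥
      singularValue (Matrix.fromBlocks A₁₁ A₁₂ A₂₁ A₂₂) k /
        (ρ * k * Real.sqrt (((m₂ : ℝ) + 1) * ((n₂ : ℝ) + 1))) := by
  classical
  rcases Nat.eq_zero_or_pos k with hk0 | hk1
  · subst hk0
    have hA11 : singularValue A₁₁ 0 = 0 := by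
      rw [singularValue]
      have h0 : kthLargest (Matrix.isHermitian_transpose_mul_self A₁₁).eigenvalues 0 = 0 := by
        rw [kthLargest]
        have he : (Finset.univ.val.map
            (Matrix.isHermitian_transpose_mul_self A₁₁).eigenvalues) = 0 := by
          simp
        rw [he]
        simp
      rw [h0, Real.sqrt_zero]
    constructor
    · rw [hA11]; exact Real.sqrt_nonneg _
    · have hden : ρ * ((0:ℕ):ℝ) * Real.sqrt (((m₂ : ℝ) + 1) * ((n₂ : ℝ) + 1)) = 0 := by
        norm_num
      rw [hden, div_zero]
      exact Real.sqrt_nonneg _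
  · set M := Matrix.fromBlocks A₁₁ A₁₂ A₂₁ A₂₂ with hM
    have hcardk : Fintype.card (Fin k) = k := Fintype.card_fin k
    -- first inequality
    have hfirst : singularValue A₁₁ k ≤ singularValue M k := by
      have hc : 0 ≤ singularValue A₁₁ k := Real.sqrt_nonneg _
      set t₁ := kthLargest (Matrix.isHermitian_transpose_mul_self A₁₁).eigenvalues k with ht₁
      have ht₁0 : 0 ≤ t₁ := by
        obtain ⟨i₀, hi₀⟩ := kl_mem (Matrix.isHermitian_transpose_mul_self A₁₁).eigenvalues k
          hk1 (le_of_eq hcardk.symm)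
        rw [ht₁, hi₀]
        exact (Matrix.posSemidef_conjTranspose_mul_self A₁₁).eigenvalues_nonneg i₀
      have hsq : (singularValue A₁₁ k)^2 = t₁ := Real.sq_sqrt ht₁0
      have h := sv_ge_coord (ι := Fin k) (κ := Fin n₂) M (singularValue A₁₁ k) hc
        (by rw [hcardk]; exact hk1) ?_
      · rwa [hcardk] at h
      intro y
      rw [hsq]
      have hmv : M *ᵥ Sum.elim y 0 = Sum.elim (A₁₁ *ᵥ y) (A₂₁ *ᵥ y) := by
        rw [hM, Matrix.fromBlocks_mulVec]
        have h1 : (Sum.elim y (0 : Fin n₂ → ℝ)) ∘ Sum.inl = y := rfl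
        have h2 : (Sum.elim y (0 : Fin n₂ → ℝ)) ∘ Sum.inr = 0 := rfl
        rw [h1, h2, Matrix.mulVec_zero, Matrix.mulVec_zero, add_zero, add_zero]
      rw [hmv]
      have hdot : Sum.elim (A₁₁ *ᵥ y) (A₂₁ *ᵥ y) ⬝ᵥ Sum.elim (A₁₁ *ᵥ y) (A₂₁ *ᵥ y)
          = (A₁₁ *ᵥ y) ⬝ᵥ (A₁₁ *ᵥ y) + (A₂₁ *ᵥ y) ⬝ᵥ (A₂₁ *ᵥ y) := by
        rw [dotProduct, Fintype.sum_sum_type]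
        simp [dotProduct]
      rw [hdot]
      have hray := rayleigh_min A₁₁ (by rw [hcardk]; exact hk1) y
      rw [hcardk, ← ht₁] at hray
      have hnn := dot_self_nonneg' (A₂₁ *ᵥ y)
      linarith
    refine ⟨hfirst, ?_⟩
    -- second inequality
    set σ := singularValue M k with hσdef
    have hσ0 : 0 ≤ σ := Real.sqrt_nonneg _
    set d := ρ * (k:ℝ) * Real.sqrt (((m₂ : ℝ) + 1) * ((n₂ : ℝ) + 1)) with hd
    have hk0' : (0:ℝ) < (k:ℝ) := by exact_mod_cast hk1
    have hρ0 : (0:ℝ) < ρ := lt_of_lt_of_le one_pos hρ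
    have hsqrt0 : (0:ℝ) < Real.sqrt (((m₂ : ℝ) + 1) * ((n₂ : ℝ) + 1)) :=
      Real.sqrt_pos.2 (by positivity)
    have hd0 : 0 < d := by rw [hd]; positivity
    rcases eq_or_lt_of_le hσ0 with hσz | hσpos
    · show singularValue A₁₁ k ≥ σ / d
      rw [← hσz, zero_div]
      exact Real.sqrt_nonneg _
    · have hc0 : 0 ≤ σ / d := le_of_lt (div_pos hσpos hd0)
      show singularValue A₁₁ k ≥ σ / d
      have h := sv_min_ge A₁₁ (σ / d) hc0 (by rw [hcardk]; exact hk1) ?_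
      · rwa [hcardk] at h
      intro u
      set N := A₁₁⁻¹ with hN
      set w := A₁₁ *ᵥ u with hw
      have hNw : N *ᵥ w = u := by
        rw [hN, hw, Matrix.mulVec_mulVec, Matrix.nonsing_inv_mul _ hA, Matrix.one_mulVec]
      set mx := ρ * Real.sqrt (((m₂ : ℝ) + 1) * ((n₂ : ℝ) + 1)) / σ with hmx
      have hmx0 : 0 ≤ mx := by rw [hmx]; positivity
      have hdetpos : 0 < |A₁₁.det| := abs_pos.2 hA.ne_zero
      have hentry : ∀ a b : Fin k, |N a b| ≤ mx := by
        intro a b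
        have hadj : N a b = A₁₁.det⁻¹ * A₁₁.adjugate a b := by
          rw [hN, Matrix.inv_def, Ring.inverse_eq_inv', Matrix.smul_apply, smul_eq_mul]
        have hdag := dagger A₁₁ A₁₂ A₂₁ A₂₂ ρ hρ hcol hrow hloc a b
        rw [← Matrix.adjugate_apply, ← hM, ← hσdef] at hdag
        have hadjb : |A₁₁.adjugate a b|
            ≤ ρ * Real.sqrt (((m₂:ℝ)+1)*((n₂:ℝ)+1)) * |A₁₁.det| / σ := by
          rw [le_div_iff₀ hσpos]
          exact hdag
        rw [hadj, abs_mul, abs_inv]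
        calc |A₁₁.det|⁻¹ * |A₁₁.adjugate a b|
            ≤ |A₁₁.det|⁻¹ * (ρ * Real.sqrt (((m₂:ℝ)+1)*((n₂:ℝ)+1)) * |A₁₁.det| / σ) :=
              mul_le_mul_of_nonneg_left hadjb (inv_nonneg.2 (abs_nonneg _))
        _ = mx := by
              rw [hmx]
              field_simp
              try ring
      have hsum : ∑ a : Fin k, ∑ b : Fin k, (N a b)^2 ≤ (k:ℝ) * ((k:ℝ) * mx^2) := by
        have hinner : ∀ a : Fin k, ∑ b : Fin k, (N a b)^2 ≤ (k:ℝ) * mx^2 := by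
          intro a
          calc ∑ b : Fin k, (N a b)^2 ≤ ∑ _b : Fin k, mx^2 := by
                apply Finset.sum_le_sum
                intro b _
                rw [← sq_abs]
                exact pow_le_pow_left₀ (abs_nonneg _) (hentry a b) 2
          _ = (k:ℝ) * mx^2 := by simp [Finset.sum_const, nsmul_eq_mul]
        calc ∑ a : Fin k, ∑ b : Fin k, (N a b)^2 ≤ ∑ _a : Fin k, (k:ℝ) * mx^2 :=
              Finset.sum_le_sum (fun a _ => hinner a)
        _ = (k:ℝ) * ((k:ℝ) * mx^2) := by simp [Finset.sum_const, nsmul_eq_mul]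
      have hfro := frob_bound N ((k:ℝ) * ((k:ℝ) * mx^2)) hsum w
      rw [hNw] at hfro
      have hkey : (σ / d)^2 * ((k:ℝ) * ((k:ℝ) * mx^2)) = 1 := by
        rw [hmx, hd]
        field_simp
      calc (σ / d)^2 * (u ⬝ᵥ u)
          ≤ (σ / d)^2 * (((k:ℝ) * ((k:ℝ) * mx^2)) * (w ⬝ᵥ w)) :=
            mul_le_mul_of_nonneg_left hfro (sq_nonneg _)
      _ = ((σ / d)^2 * ((k:ℝ) * ((k:ℝ) * mx^2))) * (w ⬝ᵥ w) := by ring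
      _ = w ⬝ᵥ w := by rw [hkey, one_mul]
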